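/- For every natural number N ≥ 1 and every x : Fin N → ℝ, the function β ↦ RSM_β(x) − β * log N tends to the mean (1/N) * ∑_{l=1}^N x_l as β tends to +∞; that is, Tendsto (fun β => β * log (∑_{l=1}^N exp (x_l / β)) − β * log N) atTop (nhds ((1/N) * ∑_{l=1}^N x_l)). -/

import Mathlib

open Real Filter

/-- For `β > 0` and `x : Fin N → ℝ` with `N ≥ 1`, the shifted RealSoftMax
`RSM_β(x) - β * log N` tends to the mean `(1/N) * ∑ l, x l` as `β → +∞`. -/
theorem rsm_tendsto_mean (N : ℕ) (hN : 1 ≤ N) (x : Fin N → ℝ) :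
    Filter.Tendsto
      (fun β : ℝ => β * Real.log (∑ l, Real.exp (x l / β)) - β * Real.log N)
      Filter.atTop
      (nhds ((1 / (N : ℝ)) * ∑ l, x l)) := by
  have hNpos : (0:ℝ) < N := by exact_mod_cast hN
  set h : ℝ → ℝ := fun t => Real.log (∑ l, Real.exp (x l * t)) - Real.log N with hh
  have hS : HasDerivAt (fun t => ∑ l, Real.exp (x l * t)) (∑ l, x l) 0 := by
    have : HasDerivAt (fun t => ∑ l, Real.exp (x l * t))
        (∑ l : Fin N, Real.exp (x l * 0) * x l) 0 :=
      HasDerivAt.fun_sum fun l _ => by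
        simpa [Function.comp_def] using (Real.hasDerivAt_exp (x l * 0)).comp 0
          ((hasDerivAt_id 0).const_mul (x l))
    simpa using this
  have hS0 : (∑ l : Fin N, Real.exp (x l * 0)) = N := by simp
  have hD : HasDerivAt h ((∑ l, x l) / N) 0 := by
    have := (hS.log (by rw [hS0]; positivity)).sub_const (Real.log N)
    rwa [hS0] at this
  have hslope : Tendsto (slope h 0) (nhdsWithin 0 {(0:ℝ)}ᶜ)
      (nhds ((∑ l, x l) / N)) := hasDerivAt_iff_tendsto_slope.mp hD
  have hinv : Tendsto (fun β : ℝ => β⁻¹) atTop (nhdsWithin 0 {(0:ℝ)}ᶜ) := by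
    apply tendsto_nhdsWithin_of_tendsto_nhds_of_eventually_within _ tendsto_inv_atTop_zero
    filter_upwards [eventually_gt_atTop (0:ℝ)] with β hβ
    simpa using (inv_pos.mpr hβ).ne'
  have key : Tendsto (fun β : ℝ => slope h 0 β⁻¹) atTop (nhds ((∑ l, x l) / N)) :=
    hslope.comp hinv
  have : ((∑ l, x l) / N) = (1 / (N:ℝ)) * ∑ l, x l := by ring
  rw [← this]
  apply key.congr'
  filter_upwards [eventually_gt_atTop (0:ℝ)] with β hβ
  have hβ0 : β ≠ 0 := hβ.ne'
  simp only [slope_def_field, hh]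
  have : ∀ l : Fin N, x l * β⁻¹ = x l / β := fun l => by rw [div_eq_mul_inv]
  simp only [this]
  field_simp
  rw [hS0]
  ring
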